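/- Let Γ be a cofinite discrete subgroup of SL(2,ℝ), z₀, z₁ ∈ ℍ, and let I = [a, b] be an interval in ℝ/ℤ. Let D(R, θ): ℝ₊ × ℝ/ℤ → ℝ₊ satisfy e^{D(R,θ)} = k(θ) e^R + O(e^{βR}) for some β < 1, uniformly in θ, where k ∈ C¹(ℝ/ℤ) is positive. Then, assuming the effective angular equidistribution N_Γ^J(R, z₀, z₁) = (κ_Γ π/vol(Γ\ℍ)) |J| e^R + O(e^{αR}) holds for some α < 1 uniformly over intervals J ⊂ ℝ/ℤ, one has N_{Γ,D}^I(R, z₀, z₁) := #{γ ∈ Γ : d(z₀, γz₁) ≤ D(R, φ_{z₀,z₁}(γ)), φ_{z₀,z₁}(γ) ∈ I} = (κ_Γ π / vol(Γ\ℍ)) (∫_I k(θ) dθ) e^R + O(e^{δR}) for some δ < 1, as R → ∞. -/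

import Mathlib

noncomputable section

open UpperHalfPlane Complex Real MeasureTheory Matrix Filter Topology Set
open scoped ENNReal NNReal

abbrev SL2R := Matrix.SpecialLinearGroup (Fin 2) ℝ

/-- `SL(2,ℝ)` carries the topology induced from the space of matrices. -/
instance : TopologicalSpace SL2R :=
  TopologicalSpace.induced (fun g : SL2R => (g : Matrix (Fin 2) (Fin 2) ℝ)) inferInstance

/-- The element `-I` of `SL(2,ℝ)`. -/
def negI : SL2R := ⟨-1, by rw [Matrix.det_neg]; simp⟩

/-- The rotation matrix `k(φ)`. -/
def rotMat (φ : ℝ) : SL2R :=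
  ⟨!![Real.cos φ, Real.sin φ; -Real.sin φ, Real.cos φ], by
    rw [Matrix.det_fin_two_of]; nlinarith [Real.sin_sq_add_cos_sq φ]⟩

/-- The matrix `γ₀ = [[1/√y₀, -x₀/√y₀],[0,√y₀]]` mapping `z₀` to `i`. -/
def scalingOf (z0 : ℍ) : SL2R :=
  ⟨!![1 / Real.sqrt z0.im, -z0.re / Real.sqrt z0.im; 0, Real.sqrt z0.im], by
    rw [Matrix.det_fin_two_of]
    have h : Real.sqrt z0.im ≠ 0 := ne_of_gt (Real.sqrt_pos.mpr z0.im_pos)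
    field_simp
    simp⟩

/-- The point `e^{-r} i` of the upper half plane. -/
def ptI (r : ℝ) : ℍ :=
  ⟨Real.exp (-r) * Complex.I, by
    rw [Complex.mul_I_im, Complex.ofReal_re]; exact Real.exp_pos (-r)⟩

/-- `φfun` is a geodesic polar angle coordinate: `φfun z ∈ [0,π)` and
`z = k(φfun z) • (e^{-r(z)} i)` where `r(z) = d(i,z)`. -/
def IsPolarAngle (φfun : ℍ → ℝ) : Prop :=
  ∀ z : ℍ, φfun z ∈ Set.Ico 0 Real.pi ∧
    z = rotMat (φfun z) • ptI (dist UpperHalfPlane.I z)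

/-- The normalized angle `φ_{z₀,w}(γ) = φ(γ₀ (γ w))/π`, i.e. `(2π)⁻¹` times the
angle at `z₀` between the vertical geodesic from `z₀` to `∞` and the geodesic from `z₀`
to `γ w`. -/
def normAngle (φfun : ℍ → ℝ) (z0 : ℍ) (γ : SL2R) (w : ℍ) : ℝ :=
  φfun (scalingOf z0 • (γ • w)) / Real.pi

/-- `x` lies in the interval `[a,b]` of `ℝ/ℤ`. -/
def InIntervalMod1 (x a b : ℝ) : Prop := ∃ m : ℤ, a ≤ x + m ∧ x + m ≤ b

instance : MeasurableSpace ℍ := borel ℍ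

/-- The hyperbolic measure `dμ = dx dy / y²` on the upper half plane. -/
def hypVolume : Measure ℍ :=
  Measure.comap (fun z : ℍ => (z : ℂ))
    ((volume : Measure ℂ).withDensity fun z => ENNReal.ofReal (1 / z.im ^ 2))

/-- `Γ` is cofinite with fundamental domain `F` of finite hyperbolic volume. -/
def IsCofiniteFundom (Γ : Subgroup SL2R) (F : Set ℍ) : Prop :=
  IsFundamentalDomain Γ F hypVolume ∧ hypVolume F < ⊤

open scoped Classical in
/-- `κ_Γ = 2` if `−I ∈ Γ` and `κ_Γ = 1` otherwise. -/
def kappa (Γ : Subgroup SL2R) : ℝ := if negI ∈ Γ then 2 else 1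

/-- `N_Γ^J(R,z₀,z₁)` for the interval `J = [c,d]` of `ℝ/ℤ`. -/
def angCount (Γ : Subgroup SL2R) (φfun : ℍ → ℝ) (z0 z1 : ℍ) (c d R : ℝ) : ℕ :=
  {γ : SL2R | γ ∈ Γ ∧ dist z0 (γ • z1) ≤ R ∧ InIntervalMod1 (normAngle φfun z0 γ z1) c d}.ncard

/-- `N_{Γ,D}^I(R,z₀,z₁) = #{γ ∈ Γ : d(z₀,γz₁) ≤ D(R, φ_{z₀,z₁}(γ)), φ_{z₀,z₁}(γ) ∈ I}`. -/
def angCountD (Γ : Subgroup SL2R) (φfun : ℍ → ℝ) (z0 z1 : ℍ) (D : ℝ → ℝ → ℝ)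
    (a b R : ℝ) : ℕ :=
  {γ : SL2R | γ ∈ Γ ∧ dist z0 (γ • z1) ≤ D R (normAngle φfun z0 γ z1) ∧
    InIntervalMod1 (normAngle φfun z0 γ z1) a b}.ncard

section AuxLemmas

lemma embed : Topology.IsEmbedding (fun g : SL2R => (g : Matrix (Fin 2) (Fin 2) ℝ)) :=
  ⟨⟨rfl⟩, fun _ _ h => Subtype.ext h⟩

lemma cont_entry (i j : Fin 2) : Continuous (fun g : SL2R => (g : Matrix (Fin 2) (Fin 2) ℝ) i j) := by
  exact Continuous.matrix_elem continuous_induced_dom i j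

instance : IsTopologicalGroup SL2R where
  continuous_mul := by
    apply continuous_induced_rng.mpr
    have : Continuous fun p : SL2R × SL2R => ((p.1 : Matrix (Fin 2) (Fin 2) ℝ) * (p.2 : Matrix (Fin 2) (Fin 2) ℝ)) :=
      Continuous.matrix_mul (continuous_induced_dom.comp continuous_fst) (continuous_induced_dom.comp continuous_snd)
    exact this
  continuous_inv := by
    apply continuous_induced_rng.mpr
    have : Continuous fun g : SL2R => (g : Matrix (Fin 2) (Fin 2) ℝ).adjugate :=
      Continuous.matrix_adjugate continuous_induced_dom
    have h2 : (fun g : SL2R => (g : Matrix (Fin 2) (Fin 2) ℝ)) ∘ (fun g : SL2R => g⁻¹)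
        = fun g : SL2R => (g : Matrix (Fin 2) (Fin 2) ℝ).adjugate := by
      funext g; exact Matrix.SpecialLinearGroup.coe_inv g
    rw [h2]; exact this

instance : T2Space SL2R := embed.t2Space

lemma sl2_det (g : SL2R) : (g : Matrix (Fin 2) (Fin 2) ℝ) 0 0 * (g : Matrix (Fin 2) (Fin 2) ℝ) 1 1
    - (g : Matrix (Fin 2) (Fin 2) ℝ) 0 1 * (g : Matrix (Fin 2) (Fin 2) ℝ) 1 0 = 1 := by
  have := g.2
  rw [Matrix.det_fin_two] at this
  linarith

lemma denom_ne (g : SL2R) (z : ℍ) :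
    ((g : Matrix (Fin 2) (Fin 2) ℝ) 1 0 * (z : ℂ) + ((g : Matrix (Fin 2) (Fin 2) ℝ) 1 1 : ℝ)) ≠ 0 := by
  intro h
  rcases eq_or_ne ((g : Matrix (Fin 2) (Fin 2) ℝ) 1 0) 0 with hc | hc
  · rw [hc] at h
    simp only [Complex.ofReal_zero, zero_mul, zero_add, Complex.ofReal_eq_zero] at h
    have := sl2_det g
    rw [h, hc] at this; simp at this
  · have him := congrArg Complex.im h
    simp only [Complex.add_im, Complex.mul_im, Complex.ofReal_im, Complex.ofReal_re,
      Complex.zero_im] at him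
    have : ((g : Matrix (Fin 2) (Fin 2) ℝ) 1 0) * (z : ℂ).im = 0 := by
      simpa using him
    rcases mul_eq_zero.mp this with h1 | h1
    · exact hc h1
    · exact (ne_of_gt z.2) h1

lemma smul_coe (g : SL2R) (z : ℍ) : ((g • z : ℍ) : ℂ)
    = ((g : Matrix (Fin 2) (Fin 2) ℝ) 0 0 * (z:ℂ) + ((g : Matrix (Fin 2) (Fin 2) ℝ) 0 1 : ℝ)) /
      ((g : Matrix (Fin 2) (Fin 2) ℝ) 1 0 * (z:ℂ) + ((g : Matrix (Fin 2) (Fin 2) ℝ) 1 1 : ℝ)) := by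
  rw [UpperHalfPlane.specialLinearGroup_apply]
  simp

lemma cont_smul (z : ℍ) : Continuous (fun g : SL2R => g • z) := by
  rw [UpperHalfPlane.isEmbedding_coe.continuous_iff]
  have : (UpperHalfPlane.coe ∘ fun g : SL2R => g • z) = fun g : SL2R =>
      (((g : Matrix (Fin 2) (Fin 2) ℝ) 0 0 * (z:ℂ) + ((g : Matrix (Fin 2) (Fin 2) ℝ) 0 1 : ℝ)) /
      ((g : Matrix (Fin 2) (Fin 2) ℝ) 1 0 * (z:ℂ) + ((g : Matrix (Fin 2) (Fin 2) ℝ) 1 1 : ℝ))) := by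
    funext g; exact smul_coe g z
  rw [this]
  apply Continuous.div
  · exact ((Complex.continuous_ofReal.comp (cont_entry 0 0)).mul continuous_const).add
      (Complex.continuous_ofReal.comp (cont_entry 0 1))
  · exact ((Complex.continuous_ofReal.comp (cont_entry 1 0)).mul continuous_const).add
      (Complex.continuous_ofReal.comp (cont_entry 1 1))
  · exact fun g => denom_ne g z


lemma smul_coe' (g : SL2R) (z : ℍ) : ((g • z : ℍ) : ℂ)
    = ((g : Matrix (Fin 2) (Fin 2) ℝ) 0 0 * (z:ℂ) + ((g : Matrix (Fin 2) (Fin 2) ℝ) 0 1 : ℝ)) /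
      ((g : Matrix (Fin 2) (Fin 2) ℝ) 1 0 * (z:ℂ) + ((g : Matrix (Fin 2) (Fin 2) ℝ) 1 1 : ℝ)) := by
  rw [UpperHalfPlane.specialLinearGroup_apply]; simp

-- imaginary part identity
lemma im_smul' (g : SL2R) (z : ℍ) :
    (g • z).im * Complex.normSq ((g : Matrix (Fin 2) (Fin 2) ℝ) 1 0 * (z:ℂ) + ((g : Matrix (Fin 2) (Fin 2) ℝ) 1 1 : ℝ)) = z.im := by
  set a := (g : Matrix (Fin 2) (Fin 2) ℝ) 0 0
  set b := (g : Matrix (Fin 2) (Fin 2) ℝ) 0 1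
  set c := (g : Matrix (Fin 2) (Fin 2) ℝ) 1 0
  set d := (g : Matrix (Fin 2) (Fin 2) ℝ) 1 1
  have him : (g • z).im = ((a * (z:ℂ) + (b:ℂ)) / (c * (z:ℂ) + (d:ℂ))).im := by
    rw [UpperHalfPlane.im, smul_coe']
  rw [him, Complex.div_im]
  have hdet : a * d - b * c = 1 := sl2_det g
  have hns : Complex.normSq (c * (z:ℂ) + (d:ℂ)) = (c * z.re + d)^2 + (c * z.im)^2 := by
    simp [Complex.normSq_apply, Complex.add_re, Complex.add_im, Complex.mul_re, Complex.mul_im]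
    ring
  rw [hns]
  have h1 : (a * (z:ℂ) + (b:ℂ)).im = a * z.im := by
    simp [Complex.add_im, Complex.mul_im]
  have h2 : (a * (z:ℂ) + (b:ℂ)).re = a * z.re + b := by
    simp [Complex.add_re, Complex.mul_re]
  have h3 : (c * (z:ℂ) + (d:ℂ)).im = c * z.im := by
    simp [Complex.add_im, Complex.mul_im]
  have h4 : (c * (z:ℂ) + (d:ℂ)).re = c * z.re + d := by
    simp [Complex.add_re, Complex.mul_re]
  rw [h1, h2, h3, h4]
  have hpos : (c * z.re + d)^2 + (c * z.im)^2 > 0 := by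
    rcases eq_or_ne c 0 with hc | hc
    · have : d ≠ 0 := by intro hd; rw [hc, hd] at hdet; simp at hdet
      rw [hc]; simpa using by positivity
    · have : c * z.im ≠ 0 := mul_ne_zero hc (ne_of_gt z.2)
      positivity
  rw [sub_mul, div_mul_cancel₀ _ hpos.ne', div_mul_cancel₀ _ hpos.ne']
  linear_combination z.im * hdet


lemma finite_ball (Γ : Subgroup SL2R) (hdisc : DiscreteTopology Γ) (z0 z1 : ℍ) (R' : ℝ) :
    {γ : SL2R | γ ∈ Γ ∧ dist z0 (γ • z1) ≤ R'}.Finite := by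
  rcases lt_or_ge R' 0 with hR | hR
  · convert Set.finite_empty
    ext γ; simp only [Set.mem_setOf_eq, Set.mem_empty_iff_false, iff_false]
    rintro ⟨-, h⟩; exact absurd (dist_nonneg.trans h) (not_le.mpr hR)
  -- constants
  set y0 := z0.im with hy0
  set y1 := z1.im with hy1
  have hy0p : 0 < y0 := z0.2
  have hy1p : 0 < y1 := z1.2
  set MW : ℝ := ‖(z0:ℂ)‖ + Real.sinh (R'/2) * (2 * Real.sqrt (y0 * (y0 * Real.exp R'))) with hMW
  have hsinh00 : (0:ℝ) ≤ Real.sinh (R'/2) := by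
    have h := Real.sinh_le_sinh.mpr (by linarith : (0:ℝ) ≤ R'/2)
    rwa [Real.sinh_zero] at h
  have hMW0 : 0 ≤ MW := by positivity
  set Q2 : ℝ := y1 * Real.exp R' / y0 with hQ2
  have hQ2p : 0 < Q2 := by positivity
  set s := Real.sqrt Q2 with hs
  have hsp : 0 ≤ s := Real.sqrt_nonneg _
  set Bd : ℝ := max (max (MW * s / y1) (MW * s + MW * s / y1 * |z1.re|))
      (max (s / y1) (s + s / y1 * |z1.re|)) with hBd
  -- the compact box
  set K : Set (Matrix (Fin 2) (Fin 2) ℝ) := {m | ∀ i j, m i j ∈ Set.Icc (-Bd) Bd} with hK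
  have hKc : IsCompact K := by
    have h1 : K = Set.pi Set.univ (fun _ : Fin 2 => Set.pi Set.univ fun _ : Fin 2 => Set.Icc (-Bd) Bd) := by
      ext m
      simp only [hK, Set.mem_setOf_eq]
      constructor
      · intro h i _
        exact fun j _ => h i j
      · intro h i j
        exact h i (Set.mem_univ i) j (Set.mem_univ j)
    rw [h1]
    exact isCompact_univ_pi fun _ => isCompact_univ_pi fun _ => isCompact_Icc
  set B : Set SL2R := {g | dist z0 (g • z1) ≤ R'} with hB
  have hBclosed : IsClosed B := by
    have : B = (fun g : SL2R => dist z0 (g • z1)) ⁻¹' (Set.Iic R') := rfl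
    rw [this]
    exact IsClosed.preimage (Continuous.dist continuous_const (cont_smul z1)) isClosed_Iic
  -- entry bounds
  have hsub : (fun g : SL2R => (g : Matrix (Fin 2) (Fin 2) ℝ)) '' B ⊆ K := by
    rintro m ⟨g, hg, rfl⟩
    set w := g • z1 with hw
    have hdist : dist z0 w ≤ R' := hg
    set a := (g : Matrix (Fin 2) (Fin 2) ℝ) 0 0
    set b := (g : Matrix (Fin 2) (Fin 2) ℝ) 0 1
    set c := (g : Matrix (Fin 2) (Fin 2) ℝ) 1 0
    set d := (g : Matrix (Fin 2) (Fin 2) ℝ) 1 1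
    set den : ℂ := (c:ℂ) * (z1:ℂ) + (d:ℂ) with hden
    -- w.im bounds
    have hwim : 0 < w.im := w.2
    have hlow : y0 * Real.exp (-R') ≤ w.im := by
      have h1 : y0 ≤ w.im * Real.exp (dist z0 w) := im_le_im_mul_exp_dist z0 w
      have h2 : Real.exp (dist z0 w) ≤ Real.exp R' := Real.exp_le_exp.mpr hdist
      have h3 : y0 ≤ w.im * Real.exp R' := h1.trans (by nlinarith [hwim])
      rw [Real.exp_neg]
      rw [mul_inv_le_iff₀ (Real.exp_pos R')] at *
      nlinarith [Real.exp_pos R']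
    have hhigh : w.im ≤ y0 * Real.exp R' := by
      have h1 : w.im ≤ y0 * Real.exp (dist w z0) := im_le_im_mul_exp_dist w z0
      rw [dist_comm] at h1
      have h2 : Real.exp (dist z0 w) ≤ Real.exp R' := Real.exp_le_exp.mpr hdist
      nlinarith [hy0p]
    -- |w| bound
    have habsw : ‖(w:ℂ)‖ ≤ MW := by
      have hde := UpperHalfPlane.dist_eq z0 w
      have harsinh : 2 * Real.arsinh (dist (z0:ℂ) (w:ℂ) / (2 * Real.sqrt (y0 * w.im))) ≤ R' := by
        rw [← hde]; exact hdist
      have hq : dist (z0:ℂ) (w:ℂ) / (2 * Real.sqrt (y0 * w.im)) ≤ Real.sinh (R'/2) := by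
        have := Real.sinh_le_sinh.mpr (by linarith : Real.arsinh (dist (z0:ℂ) (w:ℂ) / (2 * Real.sqrt (y0 * w.im))) ≤ R'/2)
        rwa [Real.sinh_arsinh] at this
      have hden0 : 0 < 2 * Real.sqrt (y0 * w.im) := by positivity
      have hd1 : dist (z0:ℂ) (w:ℂ) ≤ Real.sinh (R'/2) * (2 * Real.sqrt (y0 * w.im)) := by
        rw [div_le_iff₀ hden0] at hq; linarith
      have hsq : Real.sqrt (y0 * w.im) ≤ Real.sqrt (y0 * (y0 * Real.exp R')) := by
        apply Real.sqrt_le_sqrt; nlinarith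
      have hsinh0 : 0 ≤ Real.sinh (R'/2) := hsinh00
      have habs : ‖(w:ℂ)‖ ≤ ‖(z0:ℂ)‖ + dist (z0:ℂ) (w:ℂ) := by
        have t := dist_triangle (0:ℂ) (z0:ℂ) (w:ℂ)
        rw [dist_zero_left] at t
        simpa using t
      rw [hMW]
      have : dist (z0:ℂ) (w:ℂ) ≤ Real.sinh (R'/2) * (2 * Real.sqrt (y0 * (y0 * Real.exp R'))) := by
        apply hd1.trans; apply mul_le_mul_of_nonneg_left _ hsinh0; linarith
      linarith
    -- normSq den bound
    have hns : Complex.normSq den ≤ Q2 := by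
      have h1 : w.im * Complex.normSq den = y1 := im_smul' g z1
      have h2 : Complex.normSq den = y1 / w.im := by
        field_simp at h1 ⊢; linarith [h1]
      rw [h2, hQ2]
      rw [div_le_div_iff₀ hwim hy0p]
      have hel : (1:ℝ) ≤ Real.exp R' := Real.one_le_exp hR
      have key : y1 * Real.exp R' * (y0 * Real.exp (-R')) = y1 * y0 := by
        rw [Real.exp_neg]
        field_simp
      have h5 := mul_le_mul_of_nonneg_left hlow
        (le_of_lt (by positivity : (0:ℝ) < y1 * Real.exp R'))
      linarith
    have habsden : ‖den‖ ≤ s := by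
      rw [Complex.norm_def, hs]
      exact Real.sqrt_le_sqrt hns
    -- c and d
    have hdenim : den.im = c * y1 := by simp [hden, Complex.add_im, Complex.mul_im, hy1]
    have hdenre : den.re = c * z1.re + d := by simp [hden, Complex.add_re, Complex.mul_re]
    have hc : |c| ≤ s / y1 := by
      have h1 : |den.im| ≤ ‖den‖ := Complex.abs_im_le_norm den
      rw [hdenim, abs_mul, abs_of_pos hy1p] at h1
      rw [le_div_iff₀ hy1p]
      linarith
    have hd : |d| ≤ s + s / y1 * |z1.re| := by
      have h1 : |den.re| ≤ ‖den‖ := Complex.abs_re_le_norm den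
      have h2 : d = den.re - c * z1.re := by rw [hdenre]; ring
      rw [h2]
      calc |den.re - c * z1.re| ≤ |den.re| + |c * z1.re| := abs_sub _ _
        _ ≤ s + s / y1 * |z1.re| := by
            rw [abs_mul]
            have := mul_le_mul_of_nonneg_right hc (abs_nonneg z1.re)
            linarith
    -- numerator
    set num : ℂ := (a:ℂ) * (z1:ℂ) + (b:ℂ) with hnum
    have hnum_eq : num = (w:ℂ) * den := by
      have h1 : (w:ℂ) = num / den := smul_coe' g z1
      rw [h1, div_mul_cancel₀]
      exact denom_ne g z1
    have habsnum : ‖num‖ ≤ MW * s := by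
      rw [hnum_eq, norm_mul]
      exact mul_le_mul habsw habsden (norm_nonneg _) hMW0
    have hnumim : num.im = a * y1 := by simp [hnum, Complex.add_im, Complex.mul_im, hy1]
    have hnumre : num.re = a * z1.re + b := by simp [hnum, Complex.add_re, Complex.mul_re]
    have ha : |a| ≤ MW * s / y1 := by
      have h1 : |num.im| ≤ ‖num‖ := Complex.abs_im_le_norm num
      rw [hnumim, abs_mul, abs_of_pos hy1p] at h1
      rw [le_div_iff₀ hy1p]
      linarith
    have hb : |b| ≤ MW * s + MW * s / y1 * |z1.re| := by
      have h1 : |num.re| ≤ ‖num‖ := Complex.abs_re_le_norm num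
      have h2 : b = num.re - a * z1.re := by rw [hnumre]; ring
      rw [h2]
      calc |num.re - a * z1.re| ≤ |num.re| + |a * z1.re| := abs_sub _ _
        _ ≤ MW * s + MW * s / y1 * |z1.re| := by
            rw [abs_mul]
            have h4 := mul_le_mul_of_nonneg_right ha (abs_nonneg z1.re)
            have h3 : |num.re| ≤ MW * s := h1.trans habsnum
            exact add_le_add h3 h4
    -- conclude
    intro i j
    rw [Set.mem_Icc, ← abs_le]
    fin_cases i <;> fin_cases j
    · exact ha.trans (le_max_left _ _ |>.trans (le_max_left _ _))
    · exact hb.trans ((le_max_right _ _).trans (le_max_left _ _))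
    · exact hc.trans ((le_max_left _ _).trans (le_max_right _ _))
    · exact hd.trans ((le_max_right _ _).trans (le_max_right _ _))
  -- compactness
  have hclemb : Topology.IsClosedEmbedding (fun g : SL2R => (g : Matrix (Fin 2) (Fin 2) ℝ)) := by
    refine ⟨embed, ?_⟩
    have : Set.range (fun g : SL2R => (g : Matrix (Fin 2) (Fin 2) ℝ)) = {m : Matrix (Fin 2) (Fin 2) ℝ | m.det = 1} := by
      ext m
      constructor
      · rintro ⟨g, rfl⟩; exact g.2
      · intro h; exact ⟨⟨m, h⟩, rfl⟩
    rw [this]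
    exact isClosed_eq (continuous_id.matrix_det) continuous_const
  have hBcomp : IsCompact B := by
    rw [embed.toIsInducing.isCompact_iff]
    exact IsCompact.of_isClosed_subset hKc (hclemb.isClosedMap _ hBclosed) hsub
  have hΓclosed : IsClosed (Γ : Set SL2R) := Subgroup.isClosed_of_discrete
  have hSc : IsCompact ((Γ : Set SL2R) ∩ B) := hBcomp.inter_left hΓclosed
  have hdisc2 : DiscreteTopology ((Γ : Set SL2R) ∩ B : Set SL2R) :=
    DiscreteTopology.of_subset hdisc Set.inter_subset_left
  exact hSc.finite (isDiscrete_iff_discreteTopology.mpr hdisc2)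


lemma ncard_biUnion_le' {X : Type*} (n : ℕ) (S : ℕ → Set X) :
    (⋃ i ∈ Finset.range n, S i).ncard ≤ ∑ i ∈ Finset.range n, (S i).ncard := by
  induction n with
  | zero => simp
  | succ n ih =>
    rw [Finset.range_add_one, Finset.set_biUnion_insert, Finset.sum_insert Finset.notMem_range_self]
    refine le_trans (Set.ncard_union_le _ _) ?_
    omega

lemma ncard_biUnion_eq' {X : Type*} (n : ℕ) (S : ℕ → Set X) (hfin : ∀ i, (S i).Finite)
    (hdisj : ∀ i, i < n → ∀ j, j < n → i ≠ j → Disjoint (S i) (S j)) :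
    (⋃ i ∈ Finset.range n, S i).ncard = ∑ i ∈ Finset.range n, (S i).ncard := by
  induction n with
  | zero => simp
  | succ n ih =>
    rw [Finset.range_add_one, Finset.set_biUnion_insert, Finset.sum_insert Finset.notMem_range_self]
    have hdisj2 : Disjoint (S n) (⋃ x ∈ Finset.range n, S x) := by
      refine Set.disjoint_iUnion_right.mpr fun i => Set.disjoint_iUnion_right.mpr fun hi => ?_
      have hi' : i < n := by simpa using hi
      exact hdisj n (Nat.lt_succ_self n) i (Nat.lt_succ_of_lt hi') (by omega)
    have hfinU : (⋃ x ∈ Finset.range n, S x).Finite :=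
      Set.Finite.biUnion (Finset.finite_toSet _) (fun i _ => hfin i)
    rw [Set.ncard_union_eq hdisj2 (hfin n) hfinU,
      ih (fun i hi j hj hij => hdisj i (Nat.lt_succ_of_lt hi) j (Nat.lt_succ_of_lt hj) hij)]

lemma cover_partition {a b x : ℝ} (hab : a ≤ b) {n : ℕ} (hn : 0 < n)
    (hx : x ∈ Set.Icc a b) :
    ∃ i : ℕ, i < n ∧ a + i * ((b - a)/n) ≤ x ∧ x ≤ a + (i + 1) * ((b - a)/n) := by
  rcases eq_or_lt_of_le hab with rfl | hlt
  · refine ⟨0, hn, ?_, ?_⟩ <;> simp <;> [exact hx.1; exact hx.2]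
  · have hba : (0:ℝ) < b - a := by linarith
    have hnp : (0:ℝ) < n := Nat.cast_pos.mpr hn
    set u := (x - a) * n / (b - a) with hu
    have hu0 : 0 ≤ u := by
      apply div_nonneg _ (le_of_lt hba)
      have h1 := hx.1
      have : 0 ≤ x - a := by linarith
      positivity
    have hun : u ≤ n := by
      rw [hu, div_le_iff₀ hba]
      nlinarith [hx.2]
    have htn : ((⌊u⌋.toNat : ℕ) : ℝ) = (⌊u⌋ : ℝ) := by
      exact_mod_cast Int.toNat_of_nonneg (Int.floor_nonneg.mpr hu0)
    set j : ℕ := min (n-1) ⌊u⌋.toNat with hj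
    have hjlt : j < n := by omega
    have hj1 : (j:ℝ) ≤ u := by
      have h1 : (j:ℕ) ≤ ⌊u⌋.toNat := min_le_right _ _
      calc (j:ℝ) ≤ ((⌊u⌋.toNat : ℕ) : ℝ) := by exact_mod_cast h1
        _ = (⌊u⌋ : ℝ) := htn
        _ ≤ u := Int.floor_le u
    have hj2 : u ≤ (j:ℝ) + 1 := by
      rcases le_or_gt (⌊u⌋.toNat) (n-1) with hle | hlt2
      · have : j = ⌊u⌋.toNat := min_eq_right hle
        rw [this, htn]
        exact le_of_lt (Int.lt_floor_add_one u)
      · have hjeq : j = n - 1 := min_eq_left (le_of_lt hlt2)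
        have : (j:ℝ) = (n:ℝ) - 1 := by
          rw [hjeq]; push_cast [Nat.cast_sub hn]; ring
        rw [this]; linarith
    have heq : u * ((b - a)/n) = x - a := by
      rw [hu]; field_simp
    have hbn : 0 ≤ (b - a)/n := by positivity
    refine ⟨j, hjlt, ?_, ?_⟩
    · nlinarith [mul_le_mul_of_nonneg_right hj1 hbn]
    · nlinarith [mul_le_mul_of_nonneg_right hj2 hbn]

lemma lipschitz_on_Icc {k : ℝ → ℝ} (hk : ContDiff ℝ 1 k) (a b : ℝ) :
    ∃ L : ℝ, 0 ≤ L ∧ ∀ x ∈ Set.Icc a b, ∀ y ∈ Set.Icc a b, |k x - k y| ≤ L * |x - y| := by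
  obtain ⟨L0, hL0⟩ := (isCompact_Icc (a := a) (b := b)).exists_bound_of_continuousOn
    ((hk.continuous_deriv le_rfl).continuousOn)
  refine ⟨max L0 0, le_max_right _ _, fun x hx y hy => ?_⟩
  have := Convex.norm_image_sub_le_of_norm_deriv_le (f := k) (s := Set.Icc a b)
    (C := max L0 0) (fun z _ => hk.differentiable one_ne_zero z)
    (fun z hz => (hL0 z hz).trans (le_max_left _ _)) (convex_Icc a b) hy hx
  simpa [Real.norm_eq_abs] using this


end AuxLemmas
set_option maxHeartbeats 2000000 in
/-- (Riemann sum lemma.)  If `e^{D(R,θ)} = k(θ)e^R + O(e^{βR})`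
uniformly in `θ` with `β < 1` and `k ∈ C¹(ℝ/ℤ)` positive, then — assuming the effective
angular equidistribution `N_Γ^J(R,z₀,z₁) = (κ_Γ π/vol(Γ\ℍ))|J| e^R + O(e^{αR})` uniformly
over intervals `J ⊂ ℝ/ℤ` for some `α < 1` — one has
`N_{Γ,D}^I(R,z₀,z₁) = (κ_Γ π/vol(Γ\ℍ)) (∫_I k(θ)dθ) e^R + O(e^{δR})` for some `δ < 1`. -/
theorem riemann_sum_lemma (Γ : Subgroup SL2R) (hdisc : DiscreteTopology Γ)
    (F : Set ℍ) (hcofin : IsCofiniteFundom Γ F)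
    (φfun : ℍ → ℝ) (hφ : IsPolarAngle φfun) (z0 z1 : ℍ)
    (a b : ℝ) (hab : a ≤ b) (hb : b ≤ a + 1)
    (D : ℝ → ℝ → ℝ) (hDpos : ∀ R θ : ℝ, 0 < R → 0 < D R θ)
    (k : ℝ → ℝ) (hk : ContDiff ℝ 1 k) (hkper : Function.Periodic k 1)
    (hkpos : ∀ θ : ℝ, 0 < k θ)
    (β : ℝ) (hβ : β < 1)
    (hD : ∃ C : ℝ, ∀ R : ℝ, 0 < R → ∀ θ : ℝ,
      |Real.exp (D R θ) - k θ * Real.exp R| ≤ C * Real.exp (β * R))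
    (α : ℝ) (hα : α < 1)
    (hequi : ∃ C : ℝ, ∀ c d : ℝ, c ≤ d → d ≤ c + 1 → ∀ R : ℝ, 0 < R →
      |(angCount Γ φfun z0 z1 c d R : ℝ) -
          kappa Γ * Real.pi / (hypVolume F).toReal * (d - c) * Real.exp R|
        ≤ C * Real.exp (α * R)) :
    ∃ δ C : ℝ, δ < 1 ∧ ∀ R : ℝ, 1 ≤ R →
      |(angCountD Γ φfun z0 z1 D a b R : ℝ) -
          kappa Γ * Real.pi / (hypVolume F).toReal * (∫ θ in a..b, k θ) * Real.exp R|
        ≤ C * Real.exp (δ * R) := by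
  classical
  obtain ⟨C_D0, hD⟩ := hD
  obtain ⟨C_E0, hequi⟩ := hequi
  set σ : ℝ := max (max α β) 0 with hσdef
  have hσ0 : 0 ≤ σ := le_max_right _ _
  have hσ1 : σ < 1 := max_lt (max_lt hα hβ) one_pos
  set ε : ℝ := (1 - σ)/2 with hεdef
  set δ : ℝ := (1 + σ)/2 with hδdef
  have hε0 : 0 < ε := by rw [hεdef]; linarith
  have hδ0 : 0 < δ := by rw [hδdef]; linarith
  have hδ1 : δ < 1 := by rw [hδdef]; linarith
  have hσδ : σ ≤ δ := by rw [hδdef]; linarith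
  have hσεδ : σ + ε = δ := by rw [hδdef, hεdef]; ring
  have h1εδ : 1 - ε = δ := by rw [hδdef, hεdef]; ring
  set CD : ℝ := max C_D0 1 with hCDdef
  have hCD1 : (1:ℝ) ≤ CD := le_max_right _ _
  have hCD0 : (0:ℝ) ≤ CD := by linarith
  set CE : ℝ := max C_E0 0 with hCEdef
  have hCE0 : (0:ℝ) ≤ CE := le_max_right _ _
  have hD' : ∀ R : ℝ, 0 < R → ∀ θ : ℝ,
      |Real.exp (D R θ) - k θ * Real.exp R| ≤ CD * Real.exp (σ * R) := by
    intro R hR θ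
    refine (hD R hR θ).trans (mul_le_mul (le_max_left _ _) ?_ (Real.exp_pos _).le hCD0)
    exact Real.exp_le_exp.mpr (mul_le_mul_of_nonneg_right
      ((le_max_right α β).trans (le_max_left _ _)) hR.le)
  set A : ℝ := kappa Γ * Real.pi / (hypVolume F).toReal with hAdef
  have hE' : ∀ c d : ℝ, c ≤ d → d ≤ c + 1 → ∀ R : ℝ, 0 < R →
      |(angCount Γ φfun z0 z1 c d R : ℝ) - A * (d - c) * Real.exp R|
        ≤ CE * Real.exp (σ * R) := by
    intro c d hcd hdc R hR
    refine (hequi c d hcd hdc R hR).trans (mul_le_mul (le_max_left _ _) ?_ (Real.exp_pos _).le hCE0)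
    exact Real.exp_le_exp.mpr (mul_le_mul_of_nonneg_right
      ((le_max_left α β).trans (le_max_left _ _)) hR.le)
  clear hD hequi
  have hA0 : 0 ≤ A := by
    rw [hAdef]
    apply div_nonneg _ ENNReal.toReal_nonneg
    apply mul_nonneg _ Real.pi_nonneg
    unfold kappa
    split <;> norm_num
  -- constants attached to k
  obtain ⟨L, hL0, hLip⟩ := lipschitz_on_Icc hk a b
  have hIcc_ne : (Set.Icc a b).Nonempty := Set.nonempty_Icc.mpr hab
  obtain ⟨θmin, hθmin_mem, hθmin⟩ := isCompact_Icc.exists_isMinOn hIcc_ne hk.continuous.continuousOn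
  obtain ⟨θmax, hθmax_mem, hθmax⟩ := isCompact_Icc.exists_isMaxOn hIcc_ne hk.continuous.continuousOn
  set mk : ℝ := k θmin with hmkdef
  set Mk : ℝ := k θmax with hMkdef
  have hmk0 : 0 < mk := hkpos θmin
  have hmkle : ∀ x ∈ Set.Icc a b, mk ≤ k x := fun x hx => hθmin hx
  have hMkge : ∀ x ∈ Set.Icc a b, k x ≤ Mk := fun x hx => hθmax hx
  have hMk0 : 0 < Mk := hkpos θmax
  have hbapos : 0 ≤ b - a := by linarith
  have hba1 : b - a ≤ 1 := by linarith
  have hLba : 0 ≤ L * (b - a) := mul_nonneg hL0 hbapos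
  set c₀ : ℝ := Real.log (Mk + L * (b - a) + CD) with hc₀def
  have hargc₀ : (0:ℝ) < Mk + L * (b - a) + CD := by linarith
  have hexpc₀ : Real.exp c₀ = Mk + L * (b - a) + CD := Real.exp_log hargc₀
  have hc₀0 : 0 ≤ c₀ := Real.log_nonneg (by linarith)
  -- Dset is finite, with uniform containment
  have hDsub : ∀ R : ℝ, 0 < R →
      {γ : SL2R | γ ∈ Γ ∧ dist z0 (γ • z1) ≤ D R (normAngle φfun z0 γ z1) ∧
        InIntervalMod1 (normAngle φfun z0 γ z1) a b} ⊆
      {γ : SL2R | γ ∈ Γ ∧ dist z0 (γ • z1) ≤ c₀ + R} := by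
    intro R hR γ hγ
    obtain ⟨h1, h2, m, hm1, hm2⟩ := hγ
    set θ := normAngle φfun z0 γ z1 with hθdef
    refine ⟨h1, h2.trans ?_⟩
    have hper : k θ = k (θ + m) := by
      simpa using ((hkper.int_mul m) θ).symm
    have hup := (abs_le.mp (hD' R hR θ)).2
    have hkb : k (θ + m) ≤ Mk := hMkge _ ⟨hm1, hm2⟩
    have hσR : Real.exp (σ * R) ≤ Real.exp R := by
      apply Real.exp_le_exp.mpr
      have h9 : σ * R ≤ 1 * R := mul_le_mul_of_nonneg_right hσ1.le hR.le
      linarith only [h9]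
    have hmul : k θ * Real.exp R ≤ Mk * Real.exp R := by
      rw [hper]
      exact mul_le_mul_of_nonneg_right hkb (Real.exp_pos R).le
    have hCDe : CD * Real.exp (σ * R) ≤ CD * Real.exp R :=
      mul_le_mul_of_nonneg_left hσR hCD0
    have hfin : Real.exp (D R θ) ≤ Real.exp (c₀ + R) := by
      rw [Real.exp_add, hexpc₀]
      have hLbaR : 0 ≤ L * (b - a) * Real.exp R := mul_nonneg hLba (Real.exp_pos R).le
      have hring : (Mk + L * (b - a) + CD) * Real.exp R
          = Mk * Real.exp R + L * (b - a) * Real.exp R + CD * Real.exp R := by ring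
      rw [hring]
      have habs2 : Real.exp (D R θ) ≤ k θ * Real.exp R + CD * Real.exp (σ * R) := by
        linarith only [hup]
      linarith only [habs2, hmul, hCDe, hLbaR]
    exact Real.exp_le_exp.mp hfin
  have hballfin : ∀ r : ℝ, {γ : SL2R | γ ∈ Γ ∧ dist z0 (γ • z1) ≤ r}.Finite :=
    fun r => finite_ball Γ hdisc z0 z1 r
  -- eventual smallness conditions
  have hev : ∀ᶠ R in Filter.atTop,
      L * (b - a) * Real.exp (-(ε * R)) ≤ mk/4 ∧
      CD * Real.exp (-((1 - σ) * R)) ≤ mk/4 ∧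
      1 ≤ mk/4 * Real.exp R := by
    have hmk4 : (0:ℝ) < mk/4 := by linarith
    have h1 : Filter.Tendsto (fun R : ℝ => L * (b-a) * Real.exp (-(ε * R)))
        Filter.atTop (nhds 0) := by
      have ha1 : Filter.Tendsto (fun R : ℝ => ε * R) Filter.atTop Filter.atTop :=
        Filter.Tendsto.const_mul_atTop hε0 Filter.tendsto_id
      have ha2 := Real.tendsto_exp_neg_atTop_nhds_zero.comp ha1
      have ha3 := ha2.const_mul (L * (b-a))
      simpa [Function.comp] using ha3
    have h2 : Filter.Tendsto (fun R : ℝ => CD * Real.exp (-((1 - σ) * R)))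
        Filter.atTop (nhds 0) := by
      have ha1 : Filter.Tendsto (fun R : ℝ => (1 - σ) * R) Filter.atTop Filter.atTop :=
        Filter.Tendsto.const_mul_atTop (by linarith) Filter.tendsto_id
      have ha2 := Real.tendsto_exp_neg_atTop_nhds_zero.comp ha1
      have ha3 := ha2.const_mul CD
      simpa [Function.comp] using ha3
    have h3 : Filter.Tendsto (fun R : ℝ => mk/4 * Real.exp R) Filter.atTop Filter.atTop :=
      Filter.Tendsto.const_mul_atTop hmk4 Real.tendsto_exp_atTop
    have e1 := h1.eventually (eventually_le_nhds hmk4)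
    have e2 := h2.eventually (eventually_le_nhds hmk4)
    have e3 := h3.eventually_ge_atTop 1
    filter_upwards [e1, e2, e3] with R hR1 hR2 hR3
    exact ⟨hR1, hR2, hR3⟩
  obtain ⟨R₀', hR₀'⟩ := Filter.eventually_atTop.mp hev
  set R₀ : ℝ := max R₀' 1 with hR₀def
  set CC : ℝ := 2*A*L*(b-a)^2 + A*(b-a)*CD + A*(b-a)*Real.exp c₀ + 2*CE*Real.exp (σ*c₀)
    with hCCdef
  have hCC0 : 0 ≤ CC := by
    have e1 : (0:ℝ) ≤ 2*A*L*(b-a)^2 :=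
      mul_nonneg (mul_nonneg (mul_nonneg (by norm_num) hA0) hL0) (sq_nonneg _)
    have e2 : (0:ℝ) ≤ A*(b-a)*CD := mul_nonneg (mul_nonneg hA0 hbapos) hCD0
    have e3 : (0:ℝ) ≤ A*(b-a)*Real.exp c₀ :=
      mul_nonneg (mul_nonneg hA0 hbapos) (Real.exp_pos _).le
    have e4 : (0:ℝ) ≤ 2*CE*Real.exp (σ*c₀) :=
      mul_nonneg (mul_nonneg (by norm_num) hCE0) (Real.exp_pos _).le
    rw [hCCdef]
    linarith only [e1, e2, e3, e4]
  have key : ∀ R : ℝ, R₀ ≤ R →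
      |(angCountD Γ φfun z0 z1 D a b R : ℝ) - A * (∫ θ in a..b, k θ) * Real.exp R|
        ≤ CC * Real.exp (δ * R) := by
    intro R hRR₀
    have hR1 : (1:ℝ) ≤ R := le_trans (le_max_right R₀' 1) hRR₀
    have hRpos : (0:ℝ) < R := lt_of_lt_of_le one_pos hR1
    obtain ⟨hcond1, hcond2, hcond3⟩ := hR₀' R (le_trans (le_max_left R₀' 1) hRR₀)
    have hexpR : (0:ℝ) < Real.exp R := Real.exp_pos R
    have hexpσ : (0:ℝ) < Real.exp (σ * R) := Real.exp_pos _
    have hσRR : Real.exp (σ * R) ≤ Real.exp R := by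
      apply Real.exp_le_exp.mpr
      have h9 : σ * R ≤ 1 * R := mul_le_mul_of_nonneg_right hσ1.le hRpos.le
      linarith only [h9]
    have hσδR : Real.exp (σ*R) ≤ Real.exp (δ*R) :=
      Real.exp_le_exp.mpr (mul_le_mul_of_nonneg_right hσδ hRpos.le)
    -- mesh
    set n : ℕ := ⌈Real.exp (ε * R)⌉₊ with hndef
    have hexpε1 : (1:ℝ) ≤ Real.exp (ε * R) := Real.one_le_exp (mul_nonneg hε0.le hRpos.le)
    have hn0 : 0 < n := Nat.ceil_pos.mpr (lt_of_lt_of_le one_pos hexpε1)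
    have hnR : (1:ℝ) ≤ (n:ℝ) := by exact_mod_cast hn0
    have hnpos : (0:ℝ) < (n:ℝ) := by linarith only [hnR]
    have hnl : Real.exp (ε * R) ≤ (n:ℝ) := Nat.le_ceil _
    have hnu : (n:ℝ) ≤ 2 * Real.exp (ε * R) := by
      have h9 := Nat.ceil_lt_add_one (le_of_lt (lt_of_lt_of_le one_pos hexpε1))
      have h8 : ((n:ℕ):ℝ) < Real.exp (ε*R) + 1 := by exact_mod_cast h9
      linarith only [h8, hexpε1]
    set h : ℝ := (b - a)/n with hhdef
    have hh0 : 0 ≤ h := div_nonneg hbapos hnpos.le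
    have hnh : (n:ℝ) * h = b - a := by
      rw [hhdef]; field_simp
    have hhba : h ≤ b - a := by
      rw [hhdef]; exact div_le_self hbapos hnR
    have hh1 : h ≤ 1 := le_trans hhba hba1
    have hhe : h ≤ (b - a) * Real.exp (-(ε * R)) := by
      rw [hhdef, Real.exp_neg, div_eq_mul_inv]
      apply mul_le_mul_of_nonneg_left _ hbapos
      exact inv_anti₀ (Real.exp_pos _) hnl
    have hee : Real.exp (-(ε*R)) * Real.exp R = Real.exp (δ*R) := by
      rw [← Real.exp_add]
      congr 1
      have h9 : -(ε*R) + R = (1-ε) * R := by ring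
      rw [h9, h1εδ]
    set t : ℕ → ℝ := fun i => a + i * h with htdef
    have htmem : ∀ i : ℕ, i ≤ n → t i ∈ Set.Icc a b := by
      intro i hi
      have h1 : (0:ℝ) ≤ (i:ℝ) * h := mul_nonneg (Nat.cast_nonneg i) hh0
      have h2 : (i:ℝ) ≤ (n:ℝ) := by exact_mod_cast hi
      have h3 : (i:ℝ) * h ≤ (n:ℝ) * h := mul_le_mul_of_nonneg_right h2 hh0
      constructor
      · show a ≤ a + i * h
        linarith only [h1]
      · show a + i * h ≤ b
        linarith only [h3, hnh]
    have htdiff : ∀ i : ℕ, t (i+1) - t i = h := by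
      intro i
      show (a + (i+1 : ℕ) * h) - (a + i * h) = h
      push_cast; ring
    have ht0 : t 0 = a := by show a + (0:ℕ) * h = a; simp
    have htn : t n = b := by show a + n * h = b; linarith only [hnh]
    have htmono : ∀ i j : ℕ, i ≤ j → t i ≤ t j := by
      intro i j hij
      show a + i * h ≤ a + j * h
      have h9 : (i:ℝ) ≤ (j:ℝ) := by exact_mod_cast hij
      have h8 := mul_le_mul_of_nonneg_right h9 hh0
      linarith only [h8]
    -- integral comparisons
    have hintegrable : ∀ c d : ℝ, IntervalIntegrable k MeasureTheory.volume c d :=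
      fun c d => hk.continuous.intervalIntegrable c d
    have hsumint : (∑ i ∈ Finset.range n, ∫ θ in (t i)..(t (i+1)), k θ) = ∫ θ in a..b, k θ := by
      have h9 := intervalIntegral.sum_integral_adjacent_intervals
        (μ := MeasureTheory.volume) (a := t) (n := n) (fun i _ => hintegrable _ _)
      rw [ht0, htn] at h9
      exact h9
    have hsandwich : ∀ i : ℕ, i < n →
        h * k (t i) ≤ (∫ θ in (t i)..(t (i+1)), k θ) + L * h^2 ∧
        (∫ θ in (t i)..(t (i+1)), k θ) ≤ h * k (t i) + L * h^2 := by
      intro i hi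
      have hti : t i ∈ Set.Icc a b := htmem i (le_of_lt hi)
      have hti1 : t (i+1) ∈ Set.Icc a b := htmem (i+1) hi
      have hstep : t i ≤ t (i+1) := htmono i (i+1) (Nat.le_succ i)
      have hptwise : ∀ x ∈ Set.Icc (t i) (t (i+1)),
          k (t i) - L * h ≤ k x ∧ k x ≤ k (t i) + L * h := by
        intro x hx
        have hxab : x ∈ Set.Icc a b := ⟨le_trans hti.1 hx.1, le_trans hx.2 hti1.2⟩
        have hlips := hLip x hxab (t i) hti
        have h8 := htdiff i
        have hxd : |x - t i| ≤ h := by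
          rw [abs_le]
          constructor
          · linarith only [hx.1, hh0]
          · linarith only [hx.2, h8]
        have h7 : L * |x - t i| ≤ L * h := mul_le_mul_of_nonneg_left hxd hL0
        have h6 := abs_le.mp hlips
        constructor
        · linarith only [h6.1, h7]
        · linarith only [h6.2, h7]
      have hlow : (∫ _θ in (t i)..(t (i+1)), (k (t i) - L * h)) ≤ ∫ θ in (t i)..(t (i+1)), k θ := by
        apply intervalIntegral.integral_mono_on hstep intervalIntegrable_const (hintegrable _ _)
        intro x hx; exact (hptwise x hx).1
      have hhigh : (∫ θ in (t i)..(t (i+1)), k θ) ≤ ∫ _θ in (t i)..(t (i+1)), (k (t i) + L * h) := by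
        apply intervalIntegral.integral_mono_on hstep (hintegrable _ _) intervalIntegrable_const
        intro x hx; exact (hptwise x hx).2
      rw [intervalIntegral.integral_const, htdiff i, smul_eq_mul] at hlow hhigh
      constructor
      · have h9 : h * (k (t i) - L*h) = h * k (t i) - L*h^2 := by ring
        linarith only [hlow, h9]
      · have h9 : h * (k (t i) + L*h) = h * k (t i) + L*h^2 := by ring
        linarith only [hhigh, h9]
    have hSk_up : (∑ i ∈ Finset.range n, h * k (t i)) ≤ (∫ θ in a..b, k θ) + L*(b-a)*h := by
      have s1 : (∑ i ∈ Finset.range n, h * k (t i))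
          ≤ ∑ i ∈ Finset.range n, ((∫ θ in (t i)..(t (i+1)), k θ) + L*h^2) :=
        Finset.sum_le_sum (fun i hi => (hsandwich i (Finset.mem_range.mp hi)).1)
      have s2 : (∑ i ∈ Finset.range n, ((∫ θ in (t i)..(t (i+1)), k θ) + L*h^2))
          = (∫ θ in a..b, k θ) + (n:ℝ)*(L*h^2) := by
        rw [Finset.sum_add_distrib, hsumint, Finset.sum_const, Finset.card_range, nsmul_eq_mul]
      have s3 : (n:ℝ)*(L*h^2) = L*(b-a)*h := by
        have h9 : (n:ℝ)*(L*h^2) = L*((n:ℝ)*h)*h := by ring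
        rw [h9, hnh]
      linarith only [s1, s2, s3]
    have hSk_lo : (∫ θ in a..b, k θ) - L*(b-a)*h ≤ ∑ i ∈ Finset.range n, h * k (t i) := by
      have s1 : (∑ i ∈ Finset.range n, ∫ θ in (t i)..(t (i+1)), k θ)
          ≤ ∑ i ∈ Finset.range n, (h * k (t i) + L*h^2) :=
        Finset.sum_le_sum (fun i hi => (hsandwich i (Finset.mem_range.mp hi)).2)
      have s2 : (∑ i ∈ Finset.range n, (h * k (t i) + L*h^2))
          = (∑ i ∈ Finset.range n, h * k (t i)) + (n:ℝ)*(L*h^2) := by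
        rw [Finset.sum_add_distrib, Finset.sum_const, Finset.card_range, nsmul_eq_mul]
      have s3 : (n:ℝ)*(L*h^2) = L*(b-a)*h := by
        have h9 : (n:ℝ)*(L*h^2) = L*((n:ℝ)*h)*h := by ring
        rw [h9, hnh]
      linarith only [s1, s2, s3, hsumint]
    -- the D-count set
    set Dset : Set SL2R := {γ : SL2R | γ ∈ Γ ∧ dist z0 (γ • z1) ≤ D R (normAngle φfun z0 γ z1) ∧
        InIntervalMod1 (normAngle φfun z0 γ z1) a b} with hDsetdef
    have hDcount : (angCountD Γ φfun z0 z1 D a b R) = Dset.ncard := by rw [hDsetdef]; exact rfl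
    have hDfin : Dset.Finite := by rw [hDsetdef]; exact (hballfin (c₀ + R)).subset (hDsub R hRpos)
    -- upper radii
    have hargppos : ∀ i : ℕ, i ≤ n →
        0 < k (t i) * Real.exp R + L * h * Real.exp R + CD * Real.exp (σ * R) := by
      intro i hi
      have h1 : 0 < k (t i) * Real.exp R := mul_pos (hkpos (t i)) hexpR
      have h2 : 0 ≤ L * h * Real.exp R := mul_nonneg (mul_nonneg hL0 hh0) hexpR.le
      have h3 : 0 ≤ CD * Real.exp (σ * R) := mul_nonneg hCD0 hexpσ.le
      linarith only [h1, h2, h3]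
    set Rp : ℕ → ℝ := fun i =>
      Real.log (k (t i) * Real.exp R + L * h * Real.exp R + CD * Real.exp (σ * R)) with hRpdef
    have hexpRp : ∀ i : ℕ, i ≤ n → Real.exp (Rp i)
        = k (t i) * Real.exp R + L * h * Real.exp R + CD * Real.exp (σ * R) := by
      intro i hi
      show Real.exp (Real.log _) = _
      exact Real.exp_log (hargppos i hi)
    have hmk4R : (4:ℝ) ≤ mk * Real.exp R := by linarith only [hcond3]
    have hRppos : ∀ i : ℕ, i ≤ n → 0 < Rp i := by
      intro i hi
      apply Real.log_pos
      have h1 : mk * Real.exp R ≤ k (t i) * Real.exp R :=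
        mul_le_mul_of_nonneg_right (hmkle _ (htmem i hi)) hexpR.le
      have h2 : 0 ≤ L * h * Real.exp R := mul_nonneg (mul_nonneg hL0 hh0) hexpR.le
      have h3 : 0 ≤ CD * Real.exp (σ * R) := mul_nonneg hCD0 hexpσ.le
      linarith only [hmk4R, h1, h2, h3]
    have hargple : ∀ i : ℕ, i ≤ n →
        k (t i) * Real.exp R + L * h * Real.exp R + CD * Real.exp (σ * R) ≤ Real.exp (c₀ + R) := by
      intro i hi
      rw [Real.exp_add, hexpc₀]
      have e1 : k (t i) * Real.exp R ≤ Mk * Real.exp R :=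
        mul_le_mul_of_nonneg_right (hMkge _ (htmem i hi)) hexpR.le
      have e2 : L * h * Real.exp R ≤ L * (b-a) * Real.exp R :=
        mul_le_mul_of_nonneg_right (mul_le_mul_of_nonneg_left hhba hL0) hexpR.le
      have e3 : CD * Real.exp (σ * R) ≤ CD * Real.exp R := mul_le_mul_of_nonneg_left hσRR hCD0
      have hring : (Mk + L*(b-a) + CD) * Real.exp R
          = Mk*Real.exp R + L*(b-a)*Real.exp R + CD*Real.exp R := by ring
      linarith only [e1, e2, e3, hring]
    have hRple : ∀ i : ℕ, i ≤ n → Rp i ≤ c₀ + R := by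
      intro i hi
      have h9 : Real.exp (Rp i) ≤ Real.exp (c₀ + R) := by
        rw [hexpRp i hi]; exact hargple i hi
      exact Real.exp_le_exp.mp h9
    have hexpσRp : ∀ i : ℕ, i ≤ n →
        Real.exp (σ * Rp i) ≤ Real.exp (σ*c₀) * Real.exp (σ*R) := by
      intro i hi
      rw [← Real.exp_add]
      apply Real.exp_le_exp.mpr
      have h9 := mul_le_mul_of_nonneg_left (hRple i hi) hσ0
      have h8 : σ * (c₀ + R) = σ*c₀ + σ*R := by ring
      linarith only [h9, h8]
    -- the covering sets
    set USet : ℕ → Set SL2R := fun i => {γ : SL2R | γ ∈ Γ ∧ dist z0 (γ • z1) ≤ Rp i ∧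
        InIntervalMod1 (normAngle φfun z0 γ z1) (t i) (t (i+1))} with hUdef
    have hUfin : ∀ i : ℕ, (USet i).Finite := by
      intro i
      rw [hUdef]
      exact (hballfin (Rp i)).subset (fun γ hγ => ⟨hγ.1, hγ.2.1⟩)
    have hUcount : ∀ i : ℕ, (angCount Γ φfun z0 z1 (t i) (t (i+1)) (Rp i)) = (USet i).ncard := by
      intro i; rw [hUdef]; exact rfl
    have hcover : Dset ⊆ ⋃ i ∈ Finset.range n, USet i := by
      rw [hDsetdef]
      intro γ hγ
      obtain ⟨hγΓ, hγd, m, hm1, hm2⟩ := hγ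
      obtain ⟨i, hi, hi1, hi2⟩ := cover_partition hab hn0
        (x := normAngle φfun z0 γ z1 + m) ⟨hm1, hm2⟩
      have hti : t i = a + i * ((b-a)/n) := by rw [htdef, hhdef]
      have hti1 : t (i+1) = a + ((i:ℝ)+1) * ((b-a)/n) := by
        show a + ((i+1 : ℕ):ℝ) * h = _
        rw [hhdef]; push_cast; ring
      have hmem1 : t i ≤ normAngle φfun z0 γ z1 + m := by rw [hti]; exact hi1
      have hmem2 : normAngle φfun z0 γ z1 + m ≤ t (i+1) := by rw [hti1]; exact hi2
      have hDle : D R (normAngle φfun z0 γ z1) ≤ Rp i := by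
        apply Real.exp_le_exp.mp
        rw [hexpRp i (le_of_lt hi)]
        have hper : k (normAngle φfun z0 γ z1) = k (normAngle φfun z0 γ z1 + m) := by
          simpa using ((hkper.int_mul m) (normAngle φfun z0 γ z1)).symm
        have hup := (abs_le.mp (hD' R hRpos (normAngle φfun z0 γ z1))).2
        have hθmem : normAngle φfun z0 γ z1 + (m:ℝ) ∈ Set.Icc a b := ⟨hm1, hm2⟩
        have hklip := hLip (normAngle φfun z0 γ z1 + m) hθmem (t i) (htmem i (le_of_lt hi))
        have h8 := htdiff i
        have hd8 : |normAngle φfun z0 γ z1 + (m:ℝ) - t i| ≤ h := by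
          rw [abs_le]
          constructor
          · linarith only [hmem1, hh0]
          · linarith only [hmem2, h8]
        have h7 : L * |normAngle φfun z0 γ z1 + (m:ℝ) - t i| ≤ L * h :=
          mul_le_mul_of_nonneg_left hd8 hL0
        have h6 := (abs_le.mp hklip).2
        have h5 : k (normAngle φfun z0 γ z1 + (m:ℝ)) ≤ k (t i) + L * h := by
          linarith only [h6, h7]
        have h4 : k (normAngle φfun z0 γ z1) * Real.exp R ≤ (k (t i) + L * h) * Real.exp R := by
          rw [hper]; exact mul_le_mul_of_nonneg_right h5 hexpR.le
        have hring : (k (t i) + L*h) * Real.exp R = k (t i) * Real.exp R + L*h*Real.exp R := by ring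
        linarith only [hup, h4, hring]
      refine Set.mem_biUnion (Finset.mem_range.mpr hi) ?_
      rw [hUdef]
      exact ⟨hγΓ, hγd.trans hDle, ⟨m, hmem1, hmem2⟩⟩
    have hUbound : ∀ i ∈ Finset.range n, ((USet i).ncard : ℝ) ≤
        A * Real.exp R * (h * k (t i)) +
        (A*L*h^2*Real.exp R + A*h*CD*Real.exp (σ*R) + CE*Real.exp (σ*c₀)*Real.exp (σ*R)) := by
      intro i hi
      have hi' : i < n := Finset.mem_range.mp hi
      have hcd : t i ≤ t (i+1) := htmono i (i+1) (Nat.le_succ i)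
      have h8 := htdiff i
      have hdc : t (i+1) ≤ t i + 1 := by linarith only [h8, hh1]
      have heq := hE' (t i) (t (i+1)) hcd hdc (Rp i) (hRppos i (le_of_lt hi'))
      rw [hUcount i] at heq
      have habs := (abs_le.mp heq).2
      have he1 := hexpRp i (le_of_lt hi')
      have he2 : CE * Real.exp (σ * Rp i) ≤ CE * (Real.exp (σ*c₀) * Real.exp (σ*R)) :=
        mul_le_mul_of_nonneg_left (hexpσRp i (le_of_lt hi')) hCE0
      have h3 : ((USet i).ncard:ℝ) ≤ A * h * Real.exp (Rp i) + CE * Real.exp (σ * Rp i) := by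
        have h2 : A * (t (i+1) - t i) * Real.exp (Rp i) = A * h * Real.exp (Rp i) := by rw [h8]
        linarith only [habs, h2]
      rw [he1] at h3
      have hring : A * h * (k (t i)*Real.exp R + L*h*Real.exp R + CD*Real.exp (σ*R))
          = A * Real.exp R * (h * k (t i)) + A*L*h^2*Real.exp R + A*h*CD*Real.exp (σ*R) := by ring
      have hassoc : CE*(Real.exp (σ*c₀)*Real.exp (σ*R)) = CE*Real.exp (σ*c₀)*Real.exp (σ*R) := by ring
      linarith only [h3, he2, hring, hassoc]
    have hsum_up : (Dset.ncard : ℝ) ≤ A * Real.exp R * (∑ i ∈ Finset.range n, h * k (t i)) +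
        (n:ℝ) * (A*L*h^2*Real.exp R + A*h*CD*Real.exp (σ*R) + CE*Real.exp (σ*c₀)*Real.exp (σ*R)) := by
      have s1 : (Dset.ncard : ℝ) ≤ ((⋃ i ∈ Finset.range n, USet i).ncard : ℝ) := by
        exact_mod_cast Set.ncard_le_ncard hcover
          (Set.Finite.biUnion (Finset.finite_toSet _) fun i _ => hUfin i)
      have s2 : ((⋃ i ∈ Finset.range n, USet i).ncard : ℝ)
          ≤ ∑ i ∈ Finset.range n, ((USet i).ncard : ℝ) := by
        have h9 := ncard_biUnion_le' n USet
        calc ((⋃ i ∈ Finset.range n, USet i).ncard : ℝ)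
            ≤ ((∑ i ∈ Finset.range n, (USet i).ncard : ℕ) : ℝ) := by exact_mod_cast h9
          _ = ∑ i ∈ Finset.range n, ((USet i).ncard : ℝ) := by push_cast; rfl
      have s3 := Finset.sum_le_sum hUbound
      have s4 : (∑ i ∈ Finset.range n, (A * Real.exp R * (h * k (t i)) +
          (A*L*h^2*Real.exp R + A*h*CD*Real.exp (σ*R) + CE*Real.exp (σ*c₀)*Real.exp (σ*R))))
          = A * Real.exp R * (∑ i ∈ Finset.range n, h * k (t i)) +
          (n:ℝ) * (A*L*h^2*Real.exp R + A*h*CD*Real.exp (σ*R) + CE*Real.exp (σ*c₀)*Real.exp (σ*R)) := by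
        rw [Finset.sum_add_distrib, ← Finset.mul_sum, Finset.sum_const, Finset.card_range,
          nsmul_eq_mul]
      linarith only [s1, s2, s3, s4]
    -- error-term bounds
    have hAe : 0 ≤ A * Real.exp R := mul_nonneg hA0 hexpR.le
    have hhδ : h * Real.exp R ≤ (b-a) * Real.exp (δ*R) := by
      have h9 := mul_le_mul_of_nonneg_right hhe hexpR.le
      have h10 : (b-a) * Real.exp (-(ε*R)) * Real.exp R
          = (b-a) * (Real.exp (-(ε*R)) * Real.exp R) := by ring
      rw [h10, hee] at h9
      exact h9
    have hALba : 0 ≤ A*L*(b-a) := mul_nonneg (mul_nonneg hA0 hL0) hbapos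
    have E1 : A * Real.exp R * (L*(b-a)*h) ≤ A*L*(b-a)^2*Real.exp (δ*R) := by
      have h9 : A * Real.exp R * (L*(b-a)*h) = A*L*(b-a)*(h*Real.exp R) := by ring
      have h8 := mul_le_mul_of_nonneg_left hhδ hALba
      have h7 : A*L*(b-a)*((b-a)*Real.exp (δ*R)) = A*L*(b-a)^2*Real.exp (δ*R) := by ring
      linarith only [h9, h8, h7]
    have E2 : (n:ℝ) * (A*L*h^2*Real.exp R) ≤ A*L*(b-a)^2*Real.exp (δ*R) := by
      have h9 : (n:ℝ)*(A*L*h^2*Real.exp R) = A*L*((n:ℝ)*h)*(h*Real.exp R) := by ring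
      rw [hnh] at h9
      have h8 := mul_le_mul_of_nonneg_left hhδ hALba
      have h7 : A*L*(b-a)*((b-a)*Real.exp (δ*R)) = A*L*(b-a)^2*Real.exp (δ*R) := by ring
      linarith only [h9, h8, h7]
    have E3 : (n:ℝ) * (A*h*CD*Real.exp (σ*R)) ≤ A*(b-a)*CD*Real.exp (δ*R) := by
      have h9 : (n:ℝ)*(A*h*CD*Real.exp (σ*R)) = A*((n:ℝ)*h)*CD*Real.exp (σ*R) := by ring
      rw [hnh] at h9
      have h8 : A*(b-a)*CD*Real.exp (σ*R) ≤ A*(b-a)*CD*Real.exp (δ*R) :=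
        mul_le_mul_of_nonneg_left hσδR (mul_nonneg (mul_nonneg hA0 hbapos) hCD0)
      linarith only [h9, h8]
    have E4 : (n:ℝ) * (CE*Real.exp (σ*c₀)*Real.exp (σ*R)) ≤ 2*CE*Real.exp (σ*c₀)*Real.exp (δ*R) := by
      have hX : 0 ≤ CE*Real.exp (σ*c₀)*Real.exp (σ*R) :=
        mul_nonneg (mul_nonneg hCE0 (Real.exp_pos _).le) (Real.exp_pos _).le
      have h9 := mul_le_mul_of_nonneg_right hnu hX
      have h11 : Real.exp (ε*R)*Real.exp (σ*R) = Real.exp (δ*R) := by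
        rw [← Real.exp_add]
        congr 1
        have : ε*R + σ*R = (σ+ε)*R := by ring
        rw [this, hσεδ]
      have h10 : 2*Real.exp (ε*R)*(CE*Real.exp (σ*c₀)*Real.exp (σ*R))
          = 2*CE*Real.exp (σ*c₀)*(Real.exp (ε*R)*Real.exp (σ*R)) := by ring
      rw [h10, h11] at h9
      have h12 : 2*CE*Real.exp (σ*c₀)*Real.exp (δ*R) = 2*CE*Real.exp (σ*c₀)*Real.exp (δ*R) := rfl
      linarith only [h9]
    have hCCr : CC * Real.exp (δ*R) = 2*A*L*(b-a)^2*Real.exp (δ*R) + A*(b-a)*CD*Real.exp (δ*R)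
        + A*(b-a)*Real.exp c₀*Real.exp (δ*R) + 2*CE*Real.exp (σ*c₀)*Real.exp (δ*R) := by
      rw [hCCdef]; ring
    have hspare : 0 ≤ A*(b-a)*Real.exp c₀*Real.exp (δ*R) :=
      mul_nonneg (mul_nonneg (mul_nonneg hA0 hbapos) (Real.exp_pos _).le) (Real.exp_pos _).le
    have hup_total : (Dset.ncard : ℝ)
        ≤ A * (∫ θ in a..b, k θ) * Real.exp R + CC * Real.exp (δ * R) := by
      have t1 := mul_le_mul_of_nonneg_left hSk_up hAe
      have t1' : A * Real.exp R * ((∫ θ in a..b, k θ) + L*(b-a)*h)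
          = A * (∫ θ in a..b, k θ) * Real.exp R + A*Real.exp R*(L*(b-a)*h) := by ring
      have hsplit : (n:ℝ) * (A*L*h^2*Real.exp R + A*h*CD*Real.exp (σ*R)
            + CE*Real.exp (σ*c₀)*Real.exp (σ*R))
          = (n:ℝ)*(A*L*h^2*Real.exp R) + (n:ℝ)*(A*h*CD*Real.exp (σ*R))
            + (n:ℝ)*(CE*Real.exp (σ*c₀)*Real.exp (σ*R)) := by ring
      linarith only [hsum_up, t1, t1', E1, E2, E3, E4, hsplit, hCCr, hspare]
    -- lower bound
    have hlo_total : A * (∫ θ in a..b, k θ) * Real.exp R - CC * Real.exp (δ * R)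
        ≤ (Dset.ncard : ℝ) := by
      rcases eq_or_lt_of_le hab with heq | hlt
      · rw [← heq, intervalIntegral.integral_same]
        have h1 : (0:ℝ) ≤ (Dset.ncard : ℝ) := Nat.cast_nonneg _
        have h9 : 0 ≤ CC * Real.exp (δ*R) := mul_nonneg hCC0 (Real.exp_pos _).le
        have h10 : A * 0 * Real.exp R = 0 := by ring
        linarith only [h1, h9, h10]
      · have hba0 : (0:ℝ) < b - a := by linarith only [hlt]
        have hh0' : 0 < h := by rw [hhdef]; exact div_pos hba0 hnpos
        set η : ℝ := h/4 * Real.exp (-(ε*R)) with hηdef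
        have hη0 : 0 < η := by
          apply mul_pos _ (Real.exp_pos _)
          linarith only [hh0']
        have hexpneg1 : Real.exp (-(ε*R)) ≤ 1 := by
          have h9 := Real.exp_le_exp.mpr (by
            have := mul_nonneg hε0.le hRpos.le
            linarith only [this] : -(ε*R) ≤ 0)
          rwa [Real.exp_zero] at h9
        have hηh : η ≤ h/4 := by
          rw [hηdef]
          have h9 := mul_le_mul_of_nonneg_left hexpneg1 (by linarith only [hh0'] : (0:ℝ) ≤ h/4)
          linarith only [h9]
        have hLh4 : L * h * Real.exp R ≤ mk/4 * Real.exp R := by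
          have h8 : L * h ≤ L * ((b-a) * Real.exp (-(ε*R))) := mul_le_mul_of_nonneg_left hhe hL0
          have h7 : L * ((b-a) * Real.exp (-(ε*R))) = L * (b-a) * Real.exp (-(ε*R)) := by ring
          have h9 : L * h ≤ mk/4 := by linarith only [h8, h7, hcond1]
          exact mul_le_mul_of_nonneg_right h9 hexpR.le
        have hCD4 : CD * Real.exp (σ*R) ≤ mk/4 * Real.exp R := by
          have h9 : CD * Real.exp (σ*R) = CD * Real.exp (-((1-σ)*R)) * Real.exp R := by
            rw [mul_assoc, ← Real.exp_add]
            congr 2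
            ring
          rw [h9]
          exact mul_le_mul_of_nonneg_right hcond2 hexpR.le
        have hargm_ge : ∀ i : ℕ, i ≤ n → mk/2 * Real.exp R
            ≤ k (t i) * Real.exp R - L*h*Real.exp R - CD*Real.exp (σ*R) := by
          intro i hi
          have h1 : mk * Real.exp R ≤ k (t i) * Real.exp R :=
            mul_le_mul_of_nonneg_right (hmkle _ (htmem i hi)) hexpR.le
          linarith only [h1, hLh4, hCD4]
        have hargm_gt1 : ∀ i : ℕ, i ≤ n →
            1 < k (t i)*Real.exp R - L*h*Real.exp R - CD*Real.exp (σ*R) := by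
          intro i hi
          have h1 := hargm_ge i hi
          linarith only [h1, hcond3]
        set Rm : ℕ → ℝ := fun i =>
          Real.log (k (t i)*Real.exp R - L*h*Real.exp R - CD*Real.exp (σ*R)) with hRmdef
        have hexpRm : ∀ i : ℕ, i ≤ n → Real.exp (Rm i)
            = k (t i)*Real.exp R - L*h*Real.exp R - CD*Real.exp (σ*R) := by
          intro i hi
          show Real.exp (Real.log _) = _
          exact Real.exp_log (by linarith only [hargm_gt1 i hi])
        have hRmpos : ∀ i : ℕ, i ≤ n → 0 < Rm i := fun i hi => Real.log_pos (hargm_gt1 i hi)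
        have hRmle : ∀ i : ℕ, i ≤ n → Rm i ≤ c₀ + R := by
          intro i hi
          apply Real.exp_le_exp.mp
          rw [hexpRm i hi]
          have h2 : 0 ≤ L * h * Real.exp R := mul_nonneg (mul_nonneg hL0 hh0) hexpR.le
          have h3 : 0 ≤ CD * Real.exp (σ * R) := mul_nonneg hCD0 hexpσ.le
          have h4 := hargple i hi
          linarith only [h2, h3, h4]
        have hexpσRm : ∀ i : ℕ, i ≤ n →
            Real.exp (σ * Rm i) ≤ Real.exp (σ*c₀) * Real.exp (σ*R) := by
          intro i hi
          rw [← Real.exp_add]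
          apply Real.exp_le_exp.mpr
          have h9 := mul_le_mul_of_nonneg_left (hRmle i hi) hσ0
          have h8 : σ * (c₀ + R) = σ*c₀ + σ*R := by ring
          linarith only [h9, h8]
        set VSet : ℕ → Set SL2R := fun i => {γ : SL2R | γ ∈ Γ ∧ dist z0 (γ • z1) ≤ Rm i ∧
            InIntervalMod1 (normAngle φfun z0 γ z1) (t i + η) (t (i+1) - η)} with hVdef
        have hVfin : ∀ i : ℕ, (VSet i).Finite := by
          intro i
          rw [hVdef]
          exact (hballfin (Rm i)).subset (fun γ hγ => ⟨hγ.1, hγ.2.1⟩)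
        have hVcount : ∀ i : ℕ,
            (angCount Γ φfun z0 z1 (t i + η) (t (i+1) - η) (Rm i)) = (VSet i).ncard := by
          intro i; rw [hVdef]; exact rfl
        have hVsub : ∀ i : ℕ, i < n → VSet i ⊆ Dset := by
          intro i hi γ hγ
          rw [hVdef] at hγ
          obtain ⟨hγΓ, hγd, m, hm1, hm2⟩ := hγ
          have hti := htmem i (le_of_lt hi)
          have hti1 := htmem (i+1) hi
          have hain : a ≤ normAngle φfun z0 γ z1 + m := by
            have := hti.1
            linarith only [hm1, this, hη0]
          have hbin : normAngle φfun z0 γ z1 + m ≤ b := by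
            have := hti1.2
            linarith only [hm2, this, hη0]
          have hRmD : Rm i ≤ D R (normAngle φfun z0 γ z1) := by
            apply Real.exp_le_exp.mp
            rw [hexpRm i (le_of_lt hi)]
            have hper : k (normAngle φfun z0 γ z1) = k (normAngle φfun z0 γ z1 + m) := by
              simpa using ((hkper.int_mul m) (normAngle φfun z0 γ z1)).symm
            have hlo9 := (abs_le.mp (hD' R hRpos (normAngle φfun z0 γ z1))).1
            have hθmem : normAngle φfun z0 γ z1 + (m:ℝ) ∈ Set.Icc a b := ⟨hain, hbin⟩
            have hklip := hLip (normAngle φfun z0 γ z1 + m) hθmem (t i) (htmem i (le_of_lt hi))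
            have h8 := htdiff i
            have hd8 : |normAngle φfun z0 γ z1 + (m:ℝ) - t i| ≤ h := by
              rw [abs_le]
              constructor
              · linarith only [hm1, hη0, hh0']
              · linarith only [hm2, h8, hη0]
            have h7 : L * |normAngle φfun z0 γ z1 + (m:ℝ) - t i| ≤ L * h :=
              mul_le_mul_of_nonneg_left hd8 hL0
            have h6 := (abs_le.mp hklip).1
            have h5 : k (t i) - L * h ≤ k (normAngle φfun z0 γ z1 + (m:ℝ)) := by
              linarith only [h6, h7]
            have h4 : (k (t i) - L * h) * Real.exp R ≤ k (normAngle φfun z0 γ z1) * Real.exp R := by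
              rw [hper]; exact mul_le_mul_of_nonneg_right h5 hexpR.le
            have hring : (k (t i) - L*h) * Real.exp R = k (t i) * Real.exp R - L*h*Real.exp R := by
              ring
            linarith only [hlo9, h4, hring]
          rw [hDsetdef]
          exact ⟨hγΓ, hγd.trans hRmD, ⟨m, hain, hbin⟩⟩
        have hVdisj : ∀ i : ℕ, i < n → ∀ j : ℕ, j < n → i ≠ j → Disjoint (VSet i) (VSet j) := by
          intro i hi j hj hij
          rw [Set.disjoint_left]
          intro γ hγi hγj
          rw [hVdef] at hγi hγj
          obtain ⟨-, -, m, hm1, hm2⟩ := hγi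
          obtain ⟨-, -, m', hm1', hm2'⟩ := hγj
          have hti := htmem i (le_of_lt hi)
          have hti1 := htmem (i+1) hi
          have htj := htmem j (le_of_lt hj)
          have htj1 := htmem (j+1) hj
          have hmm' : m = m' := by
            have h9 : |((m - m' : ℤ) : ℝ)| < 1 := by
              have e1 : a ≤ normAngle φfun z0 γ z1 + m := by linarith only [hm1, hti.1, hη0]
              have e2 : normAngle φfun z0 γ z1 + m ≤ b - η := by linarith only [hm2, hti1.2]
              have e3 : a ≤ normAngle φfun z0 γ z1 + m' := by linarith only [hm1', htj.1, hη0]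
              have e4 : normAngle φfun z0 γ z1 + m' ≤ b - η := by linarith only [hm2', htj1.2]
              rw [abs_lt]
              push_cast
              constructor
              · linarith only [e1, e4, hba1, hη0]
              · linarith only [e2, e3, hba1, hη0]
            have h8 : |(m - m' : ℤ)| < 1 := by exact_mod_cast h9
            have := Int.abs_lt_one_iff.mp h8
            omega
          subst hmm'
          rcases Nat.lt_or_ge i j with hij2 | hij2
          · have h9 : t (i+1) ≤ t j := htmono (i+1) j hij2
            linarith only [hm2, hm1', h9, hη0]
          · have hij3 : j < i := by omega
            have h9 : t (j+1) ≤ t i := htmono (j+1) i hij3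
            linarith only [hm2', hm1, h9, hη0]
        have hηh2 : 2*η ≤ h := by linarith only [hηh, hh0']
        have hVlow : ∀ i ∈ Finset.range n,
            A * Real.exp R * (h * k (t i)) - (A*L*h^2*Real.exp R + A*h*CD*Real.exp (σ*R)
              + 2*η*(A*Real.exp c₀*Real.exp R) + CE*Real.exp (σ*c₀)*Real.exp (σ*R))
            ≤ ((VSet i).ncard : ℝ) := by
          intro i hi
          have hi' : i < n := Finset.mem_range.mp hi
          have h8 := htdiff i
          have hcd : t i + η ≤ t (i+1) - η := by linarith only [h8, hηh2]
          have hdc : t (i+1) - η ≤ (t i + η) + 1 := by linarith only [h8, hh1, hη0]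
          have heq := hE' (t i + η) (t (i+1) - η) hcd hdc (Rm i) (hRmpos i (le_of_lt hi'))
          rw [hVcount i] at heq
          have habs := (abs_le.mp heq).1
          have he1 := hexpRm i (le_of_lt hi')
          have he2 : CE * Real.exp (σ * Rm i) ≤ CE * (Real.exp (σ*c₀) * Real.exp (σ*R)) :=
            mul_le_mul_of_nonneg_left (hexpσRm i (le_of_lt hi')) hCE0
          have hdd : (t (i+1) - η) - (t i + η) = h - 2*η := by linarith only [h8]
          have h3 : A * (h - 2*η) * Real.exp (Rm i) - CE * Real.exp (σ * Rm i)
              ≤ ((VSet i).ncard:ℝ) := by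
            have h2 : A * ((t (i+1) - η) - (t i + η)) * Real.exp (Rm i)
                = A * (h - 2*η) * Real.exp (Rm i) := by rw [hdd]
            linarith only [habs, h2]
          have hsplit9 : A * (h - 2*η) * Real.exp (Rm i)
              = A * h * Real.exp (Rm i) - 2*η*(A*Real.exp (Rm i)) := by ring
          have hexpRmle : Real.exp (Rm i) ≤ Real.exp c₀ * Real.exp R := by
            have h9 : Real.exp (Rm i) ≤ Real.exp (c₀ + R) :=
              Real.exp_le_exp.mpr (hRmle i (le_of_lt hi'))
            rw [Real.exp_add] at h9
            exact h9
          have hbound2 : 2*η*(A*Real.exp (Rm i)) ≤ 2*η*(A*Real.exp c₀*Real.exp R) := by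
            have h9 : A*Real.exp (Rm i) ≤ A*Real.exp c₀*Real.exp R := by
              have := mul_le_mul_of_nonneg_left hexpRmle hA0
              have hr : A*(Real.exp c₀*Real.exp R) = A*Real.exp c₀*Real.exp R := by ring
              linarith only [this, hr]
            have h10 : (0:ℝ) ≤ 2*η := by linarith only [hη0]
            exact mul_le_mul_of_nonneg_left h9 h10
          have hring2 : A * h * (k (t i)*Real.exp R - L*h*Real.exp R - CD*Real.exp (σ*R))
              = A * Real.exp R * (h * k (t i)) - A*L*h^2*Real.exp R - A*h*CD*Real.exp (σ*R) := by
            ring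
          rw [he1] at h3
          have hassoc : CE*(Real.exp (σ*c₀)*Real.exp (σ*R))
              = CE*Real.exp (σ*c₀)*Real.exp (σ*R) := by ring
          have hAh : (0:ℝ) ≤ A * h := mul_nonneg hA0 hh0
          -- combine: need A*(h-2η)*expRm ≥ bigLHS
          have hfinal : A * Real.exp R * (h * k (t i)) - (A*L*h^2*Real.exp R
              + A*h*CD*Real.exp (σ*R) + 2*η*(A*Real.exp c₀*Real.exp R)
              + CE*Real.exp (σ*c₀)*Real.exp (σ*R))
              ≤ A * (h - 2*η) * (k (t i)*Real.exp R - L*h*Real.exp R - CD*Real.exp (σ*R))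
                - CE * Real.exp (σ * Rm i) := by
            have hs : A * (h - 2*η) * (k (t i)*Real.exp R - L*h*Real.exp R - CD*Real.exp (σ*R))
                = A * h * (k (t i)*Real.exp R - L*h*Real.exp R - CD*Real.exp (σ*R))
                  - 2*η*(A*(k (t i)*Real.exp R - L*h*Real.exp R - CD*Real.exp (σ*R))) := by ring
            have hq : A*(k (t i)*Real.exp R - L*h*Real.exp R - CD*Real.exp (σ*R))
                ≤ A*Real.exp c₀*Real.exp R := by
              have h9 : k (t i)*Real.exp R - L*h*Real.exp R - CD*Real.exp (σ*R)
                  ≤ Real.exp c₀ * Real.exp R := by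
                rw [← he1]; exact hexpRmle
              have := mul_le_mul_of_nonneg_left h9 hA0
              have hr : A*(Real.exp c₀*Real.exp R) = A*Real.exp c₀*Real.exp R := by ring
              linarith only [this, hr]
            have hq2 : 2*η*(A*(k (t i)*Real.exp R - L*h*Real.exp R - CD*Real.exp (σ*R)))
                ≤ 2*η*(A*Real.exp c₀*Real.exp R) :=
              mul_le_mul_of_nonneg_left hq (by linarith only [hη0])
            linarith only [hs, hq2, hring2, he2, hassoc]
          linarith only [hfinal, h3]
        -- sum the lower bounds
        have hsum_lo : A*Real.exp R*(∑ i ∈ Finset.range n, h*k (t i))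
            - (n:ℝ)*(A*L*h^2*Real.exp R + A*h*CD*Real.exp (σ*R)
              + 2*η*(A*Real.exp c₀*Real.exp R) + CE*Real.exp (σ*c₀)*Real.exp (σ*R))
            ≤ (Dset.ncard : ℝ) := by
          have s3 := Finset.sum_le_sum hVlow
          have s4 : (∑ i ∈ Finset.range n, (A * Real.exp R * (h * k (t i))
              - (A*L*h^2*Real.exp R + A*h*CD*Real.exp (σ*R)
                + 2*η*(A*Real.exp c₀*Real.exp R) + CE*Real.exp (σ*c₀)*Real.exp (σ*R))))
              = A*Real.exp R*(∑ i ∈ Finset.range n, h*k (t i))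
              - (n:ℝ)*(A*L*h^2*Real.exp R + A*h*CD*Real.exp (σ*R)
                + 2*η*(A*Real.exp c₀*Real.exp R) + CE*Real.exp (σ*c₀)*Real.exp (σ*R)) := by
            rw [Finset.sum_sub_distrib, ← Finset.mul_sum, Finset.sum_const, Finset.card_range,
              nsmul_eq_mul]
          have s5 : (∑ i ∈ Finset.range n, ((VSet i).ncard : ℝ))
              = ((⋃ i ∈ Finset.range n, VSet i).ncard : ℝ) := by
            have h9 := ncard_biUnion_eq' n VSet hVfin hVdisj
            rw [h9]
            push_cast
            rfl
          have s6 : ((⋃ i ∈ Finset.range n, VSet i).ncard : ℝ) ≤ (Dset.ncard : ℝ) := by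
            have hsub9 : (⋃ i ∈ Finset.range n, VSet i) ⊆ Dset := by
              intro γ hγ
              rw [Set.mem_iUnion₂] at hγ
              obtain ⟨i, hi, hγi⟩ := hγ
              exact hVsub i (Finset.mem_range.mp hi) hγi
            exact_mod_cast Set.ncard_le_ncard hsub9 hDfin
          linarith only [s3, s4, s5, s6]
        -- error bounds for lower side
        have t2 := mul_le_mul_of_nonneg_left hSk_lo hAe
        have t2' : A * Real.exp R * ((∫ θ in a..b, k θ) - L*(b-a)*h)
            = A * (∫ θ in a..b, k θ) * Real.exp R - A*Real.exp R*(L*(b-a)*h) := by ring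
        have E5 : (n:ℝ) * (2*η*(A*Real.exp c₀*Real.exp R)) ≤ A*(b-a)*Real.exp c₀*Real.exp (δ*R) := by
          have h9 : (n:ℝ) * (2*η*(A*Real.exp c₀*Real.exp R))
              = A*Real.exp c₀*((n:ℝ)*h)*(Real.exp (-(ε*R))*Real.exp R)/2 := by
            rw [hηdef]; ring
          rw [hnh, hee] at h9
          have h8 : A*Real.exp c₀*(b-a)*Real.exp (δ*R)/2 ≤ A*(b-a)*Real.exp c₀*Real.exp (δ*R) := by
            have h7 : 0 ≤ A*(b-a)*Real.exp c₀*Real.exp (δ*R) := hspare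
            have h6 : A*Real.exp c₀*(b-a)*Real.exp (δ*R)/2
                = (A*(b-a)*Real.exp c₀*Real.exp (δ*R))/2 := by ring
            linarith only [h7, h6]
          linarith only [h9, h8]
        have hsplit2 : (n:ℝ) * (A*L*h^2*Real.exp R + A*h*CD*Real.exp (σ*R)
              + 2*η*(A*Real.exp c₀*Real.exp R) + CE*Real.exp (σ*c₀)*Real.exp (σ*R))
            = (n:ℝ)*(A*L*h^2*Real.exp R) + (n:ℝ)*(A*h*CD*Real.exp (σ*R))
              + (n:ℝ)*(2*η*(A*Real.exp c₀*Real.exp R))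
              + (n:ℝ)*(CE*Real.exp (σ*c₀)*Real.exp (σ*R)) := by ring
        linarith only [hsum_lo, t2, t2', E1, E2, E3, E4, E5, hsplit2, hCCr]
    -- conclude
    have hDcast : (angCountD Γ φfun z0 z1 D a b R : ℝ) = (Dset.ncard : ℝ) := by
      exact_mod_cast congrArg (fun x : ℕ => (x:ℝ)) hDcount
    rw [hDcast, abs_le]
    constructor
    · linarith only [hlo_total]
    · linarith only [hup_total]
  -- small R regime
  set NB : ℝ := ({γ : SL2R | γ ∈ Γ ∧ dist z0 (γ • z1) ≤ c₀ + R₀}.ncard : ℝ) with hNBdef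
  set C₁ : ℝ := NB + A * |∫ θ in a..b, k θ| * Real.exp R₀ with hC₁def
  have hC₁0 : 0 ≤ C₁ := by
    have h1 : (0:ℝ) ≤ NB := Nat.cast_nonneg _
    have h2 : (0:ℝ) ≤ A * |∫ θ in a..b, k θ| * Real.exp R₀ :=
      mul_nonneg (mul_nonneg hA0 (abs_nonneg _)) (Real.exp_pos _).le
    rw [hC₁def]
    linarith only [h1, h2]
  refine ⟨δ, CC + C₁, hδ1, ?_⟩
  intro R hR1
  have hRpos : 0 < R := lt_of_lt_of_le one_pos hR1
  have hexpδR : (1:ℝ) ≤ Real.exp (δ * R) :=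
    Real.one_le_exp (mul_nonneg hδ0.le (by linarith only [hRpos]))
  rcases le_or_gt R₀ R with hbig | hsmall
  · have := key R hbig
    have hpad : CC * Real.exp (δ * R) ≤ (CC + C₁) * Real.exp (δ * R) := by
      apply mul_le_mul_of_nonneg_right _ (Real.exp_pos _).le
      linarith only [hC₁0]
    linarith only [this, hpad]
  · -- 1 ≤ R < R₀
    have hsub2 : {γ : SL2R | γ ∈ Γ ∧ dist z0 (γ • z1) ≤ D R (normAngle φfun z0 γ z1) ∧
        InIntervalMod1 (normAngle φfun z0 γ z1) a b} ⊆
        {γ : SL2R | γ ∈ Γ ∧ dist z0 (γ • z1) ≤ c₀ + R₀} := by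
      refine (hDsub R hRpos).trans ?_
      intro γ hγ
      exact ⟨hγ.1, hγ.2.trans (by linarith)⟩
    have hcnt : (angCountD Γ φfun z0 z1 D a b R : ℝ) ≤ NB := by
      rw [hNBdef]
      exact_mod_cast Nat.cast_le.mpr (Set.ncard_le_ncard hsub2 (hballfin _))
    have hcnt0 : (0:ℝ) ≤ (angCountD Γ φfun z0 z1 D a b R : ℝ) := Nat.cast_nonneg _
    have hmain : |A * (∫ θ in a..b, k θ) * Real.exp R| ≤ A * |∫ θ in a..b, k θ| * Real.exp R₀ := by
      rw [abs_mul, abs_mul, _root_.abs_of_nonneg hA0, _root_.abs_of_nonneg (Real.exp_pos R).le]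
      have h9 : Real.exp R ≤ Real.exp R₀ := Real.exp_le_exp.mpr hsmall.le
      have h0 : 0 ≤ A * |∫ θ in a..b, k θ| := mul_nonneg hA0 (abs_nonneg _)
      exact mul_le_mul_of_nonneg_left h9 h0
    have habs : |(angCountD Γ φfun z0 z1 D a b R : ℝ) -
        A * (∫ θ in a..b, k θ) * Real.exp R| ≤ C₁ := by
      rw [hC₁def]
      have h2 : |(angCountD Γ φfun z0 z1 D a b R : ℝ)| ≤ NB := by
        rwa [_root_.abs_of_nonneg hcnt0]
      have h3 := abs_sub (angCountD Γ φfun z0 z1 D a b R : ℝ)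
        (A * (∫ θ in a..b, k θ) * Real.exp R)
      linarith only [h2, h3, hmain]
    calc |(angCountD Γ φfun z0 z1 D a b R : ℝ) - A * (∫ θ in a..b, k θ) * Real.exp R|
        ≤ C₁ := habs
      _ ≤ C₁ * Real.exp (δ * R) := le_mul_of_one_le_right hC₁0 hexpδR
      _ ≤ (CC + C₁) * Real.exp (δ * R) := by
          apply mul_le_mul_of_nonneg_right _ (Real.exp_pos _).le
          linarith
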